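/- Let d = (d_1,...,d_h) with 1 ≤ d_1 ≤ ... ≤ d_h, σ = Σ_{i=1}^h(d_i-1), and D < σ. With φ_m defined as the difference of Hilbert functions HF(S̄/(x^d); m) - HF(S̄/L(d;m-1); m) for 2 ≤ m ≤ σ (and 0 otherwise), one has Σ_{m=D+1}^σ φ_m ≥ σ - D; consequently Π_{i=1}^h d_i - Σ_{m=D+1}^σ φ_m - 1 ≤ Π_{i=1}^h d_i - σ + D - 1 (the bound of Theorem THM multiplicity improves the Engheta–Huneke–Mantero–McCullough–Seceleanu bound). -/

import Mathlib

open MvPolynomial Finsupp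

variable {k : Type} [Field k]

/-- Hilbert function of `S/I` in degree `m`, where `S = k[x_1,...,x_n]`. -/
noncomputable def HF {n : ℕ} (I : Ideal (MvPolynomial (Fin n) k)) (m : ℕ) : ℕ :=
  Module.finrank k
    ((homogeneousSubmodule (Fin n) k m).map (Ideal.Quotient.mkₐ k I).toLinearMap)

/-- The ideal `(x_1^{d_1},...,x_h^{d_h})` inside `k[x_1,...,x_n]`. -/
noncomputable def pows {n h : ℕ} (hh : h ≤ n) (d : Fin h → ℕ) :
    Ideal (MvPolynomial (Fin n) k) :=
  Ideal.span (Set.range fun i : Fin h => (X (Fin.castLE hh i) : MvPolynomial (Fin n) k) ^ d i)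

/-- `u` is the exponent vector of the lexicographically largest monomial of degree `D`
not belonging to the ideal `I` (convention `x_1 > x_2 > ... > x_n`). -/
def IsLexLargestNonmember {n : ℕ} (I : Ideal (MvPolynomial (Fin n) k)) (D : ℕ)
    (u : Fin n →₀ ℕ) : Prop :=
  (∑ i, u i) = D ∧ (monomial u (1 : k)) ∉ I ∧
    ∀ v : Fin n →₀ ℕ, (∑ i, v i) = D → (monomial v (1 : k)) ∉ I → toLex v ≤ toLex u

/-- Hilbert–Samuel (cumulative Hilbert) function of `S/I`. -/
noncomputable def cumHF {n : ℕ} (I : Ideal (MvPolynomial (Fin n) k)) (m : ℕ) : ℤ :=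
  ∑ j ∈ Finset.range (m + 1), (HF I j : ℤ)

/-- Forward difference operator. -/
def diffOp (f : ℕ → ℤ) : ℕ → ℤ := fun m => f (m + 1) - f m

/-- The multiplicity `e(S/I)`, where `t = dim S/I`: the eventual (constant) value of the
`t`-th finite difference of the Hilbert–Samuel function of `S/I`. -/
noncomputable def mult {n : ℕ} (I : Ideal (MvPolynomial (Fin n) k)) (t : ℕ) : ℤ :=
  Filter.limsup (diffOp^[t] (cumHF I)) Filter.atTop

/-- The height of an ideal: the infimum of heights of primes containing it. -/
noncomputable def idealHeight {n : ℕ} (I : Ideal (MvPolynomial (Fin n) k)) : ℕ∞ :=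
  ⨅ (P : PrimeSpectrum (MvPolynomial (Fin n) k)) (_ : I ≤ P.asIdeal), Order.height P

/-- A homogeneous ideal. -/
def IsHomogeneousIdeal {n : ℕ} (I : Ideal (MvPolynomial (Fin n) k)) : Prop :=
  ∀ f ∈ I, ∀ m : ℕ, homogeneousComponent m f ∈ I

/-- Hilbert function of the graded submodule `a/f` of `S/f` in degree `m`. -/
noncomputable def HFsub {n : ℕ} (f a : Ideal (MvPolynomial (Fin n) k)) (m : ℕ) : ℕ :=
  Module.finrank k
    ((Submodule.map (Ideal.Quotient.mkₐ k f).toLinearMap (homogeneousSubmodule (Fin n) k m)) ⊓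
      (Submodule.map (Ideal.Quotient.mkₐ k f).toLinearMap (Submodule.restrictScalars k a)) :
      Submodule k (MvPolynomial (Fin n) k ⧸ f))

/-- The paper's `φ_m`: the difference `HF(S̄/(x^d); m) - HF(S̄/L(d;m-1); m)`, where
`L(d;m-1) = (x^d) + (U_{m-1})` and `U` is a family of lex-largest nonmember exponent vectors. -/
noncomputable def phi {k : Type} [Field k] {h : ℕ} (d : Fin h → ℕ) (U : ℕ → (Fin h →₀ ℕ))
    (m : ℕ) : ℕ :=
  HF (pows (k := k) le_rfl d) m -
    HF (pows (k := k) le_rfl d ⊔ Ideal.span {monomial (U (m - 1)) (1 : k)}) m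

/- ### Auxiliary lemmas -/

section Aux

set_option maxHeartbeats 1000000
set_option synthInstance.maxHeartbeats 1000000

instance hsFD (k : Type) [Field k] (n m : ℕ) :
    FiniteDimensional k (homogeneousSubmodule (Fin n) k m) := by
  apply Submodule.finiteDimensional_of_le (S₂ := restrictTotalDegree (Fin n) k m)
  intro p hp
  rw [mem_restrictTotalDegree]
  exact ((mem_homogeneousSubmodule _ _).mp hp).totalDegree_le

lemma HF_lt {k : Type} [Field k] {n : ℕ} {I J : Ideal (MvPolynomial (Fin n) k)}
    (hIJ : I ≤ J) {m : ℕ} {w : MvPolynomial (Fin n) k}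
    (hw : w ∈ homogeneousSubmodule (Fin n) k m) (hwJ : w ∈ J) (hwI : w ∉ I) :
    HF J m < HF I m := by
  set mkI := (Ideal.Quotient.mkₐ k I).toLinearMap with hmkI
  set V := (homogeneousSubmodule (Fin n) k m).map mkI with hV
  have : FiniteDimensional k V := Module.Finite.map _ _
  let φ : (MvPolynomial (Fin n) k ⧸ I) →ₐ[k] (MvPolynomial (Fin n) k ⧸ J) :=
    Ideal.Quotient.liftₐ I (Ideal.Quotient.mkₐ k J)
      (fun a ha => by
        show Ideal.Quotient.mk J a = 0
        exact Ideal.Quotient.eq_zero_iff_mem.mpr (hIJ ha))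
  have hcomp : (Ideal.Quotient.mkₐ k J).toLinearMap = φ.toLinearMap.comp mkI := by
    ext x
    simp [φ, mkI]
    rfl
  have hmapJ : (homogeneousSubmodule (Fin n) k m).map (Ideal.Quotient.mkₐ k J).toLinearMap
      = V.map φ.toLinearMap := by
    rw [hcomp, ← Submodule.map_comp]
  let f : V →ₗ[k] (MvPolynomial (Fin n) k ⧸ J) := φ.toLinearMap.comp V.subtype
  have hrange : LinearMap.range f = V.map φ.toLinearMap := by
    rw [LinearMap.range_comp, Submodule.range_subtype]
  have hwV : mkI w ∈ V := Submodule.mem_map_of_mem hw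
  have hne : mkI w ≠ 0 := by
    simpa [mkI, Ideal.Quotient.eq_zero_iff_mem] using hwI
  have hxker : (⟨mkI w, hwV⟩ : V) ∈ LinearMap.ker f := by
    show φ (mkI w) = 0
    show Ideal.Quotient.mk J w = 0
    exact Ideal.Quotient.eq_zero_iff_mem.mpr hwJ
  have h1 : 0 < Module.finrank k (LinearMap.ker f) := by
    apply Submodule.one_le_finrank_iff.mpr
    intro hb
    have h0 := (Submodule.mem_bot k).mp (hb ▸ hxker)
    simp [Subtype.ext_iff, hne] at h0
  have h2 := LinearMap.finrank_range_add_finrank_ker f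
  have hle : Module.finrank k (LinearMap.range f) < Module.finrank k V := by omega
  unfold HF
  rw [hmapJ, ← hrange]
  exact hle

lemma mem_pows_iff {k : Type} [Field k] {h : ℕ} (d : Fin h → ℕ) (u : Fin h →₀ ℕ) :
    (monomial u (1 : k)) ∈ pows (k := k) le_rfl d ↔ ∃ i, d i ≤ u i := by
  have h1 : pows (k := k) (le_rfl : h ≤ h) d
      = Ideal.span ((fun s => monomial s (1 : k)) ''
          (Set.range fun i : Fin h => Finsupp.single i (d i))) := by
    unfold pows
    congr 1
    rw [← Set.range_comp]
    apply congrArg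
    funext i
    simp [X_pow_eq_monomial, Fin.castLE]
  rw [h1, mem_ideal_span_monomial_image]
  rw [show (monomial u (1:k)).support = {u} from
    by classical rw [support_monomial, if_neg (one_ne_zero)]]
  simp only [Finset.mem_singleton]
  constructor
  · intro H
    rcases H u rfl with ⟨s, ⟨i, rfl⟩, hs⟩
    exact ⟨i, by simpa using (Finsupp.single_le_iff).mp hs⟩
  · rintro ⟨i, hi⟩ x rfl
    exact ⟨Finsupp.single i (d i), ⟨i, rfl⟩, Finsupp.single_le_iff.mpr hi⟩

variable {h : ℕ}

def Dp (d : Fin h → ℕ) (j : ℕ) : ℕ := if hj : j < h then d ⟨j, hj⟩ - 1 else 0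

def Gfun (d : Fin h → ℕ) (m j : ℕ) : ℕ :=
  min (Dp d j) (m - ∑ l ∈ Finset.range j, Dp d l)

lemma Gfun_psum (d : Fin h → ℕ) (m : ℕ) (j : ℕ) :
    ∑ l ∈ Finset.range j, Gfun d m l = min m (∑ l ∈ Finset.range j, Dp d l) := by
  induction j with
  | zero => simp
  | succ j ih =>
    rw [Finset.sum_range_succ, Finset.sum_range_succ, ih, Gfun]
    omega

noncomputable def gvec (d : Fin h → ℕ) (m : ℕ) : Fin h →₀ ℕ :=
  Finsupp.equivFunOnFinite.symm fun i => Gfun d m i.val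

lemma gvec_apply (d : Fin h → ℕ) (m : ℕ) (i : Fin h) : gvec d m i = Gfun d m i.val := rfl

lemma sum_Iio_fin {M : Type*} [AddCommMonoid M] (F : ℕ → M) (i : Fin h) :
    ∑ j ∈ Finset.Iio i, F j.val = ∑ j ∈ Finset.range i.val, F j := by
  rw [← Nat.Iio_eq_range, ← Fin.map_valEmbedding_Iio, Finset.sum_map]
  rfl

lemma Dp_apply (d : Fin h → ℕ) (i : Fin h) : Dp d i.val = d i - 1 := by
  simp [Dp, i.isLt]

lemma sigma_eq (d : Fin h → ℕ) : ∑ i, (d i - 1) = ∑ l ∈ Finset.range h, Dp d l := by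
  rw [← Fin.sum_univ_eq_sum_range (fun l => Dp d l) h]
  exact Finset.sum_congr rfl fun i _ => (Dp_apply d i).symm

lemma gvec_sum (d : Fin h → ℕ) (m : ℕ) (hm : m ≤ ∑ i, (d i - 1)) :
    ∑ i, gvec d m i = m := by
  have : ∑ i, gvec d m i = ∑ l ∈ Finset.range h, Gfun d m l := by
    rw [← Fin.sum_univ_eq_sum_range (fun l => Gfun d m l) h]
    rfl
  rw [this, Gfun_psum, ← sigma_eq]
  omega

lemma gvec_lt (d : Fin h → ℕ) (hd1 : ∀ i, 1 ≤ d i) (m : ℕ) (i : Fin h) : gvec d m i < d i := by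
  have h1 : Gfun d m i.val ≤ Dp d i.val := min_le_left _ _
  have h2 := Dp_apply d i
  have := hd1 i
  rw [gvec_apply]
  omega

lemma gvec_mono (d : Fin h → ℕ) {a b : ℕ} (hab : a ≤ b) : gvec d a ≤ gvec d b := by
  rw [Finsupp.le_def]
  intro i
  rw [gvec_apply, gvec_apply, Gfun, Gfun]
  omega

/-- lex maximality of gvec among nonmember exponent vectors of degree m -/
lemma gvec_lex_max (d : Fin h → ℕ) (m : ℕ) (v : Fin h →₀ ℕ)
    (hv : ∑ i, v i = m) (hvd : ∀ i, v i < d i) : toLex v ≤ toLex (gvec d m) := by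
  by_contra hcon
  push_neg at hcon
  rw [Finsupp.Lex.lt_iff] at hcon
  obtain ⟨i, heq, hlt⟩ := hcon
  simp only [ofLex_toLex] at heq hlt
  have hpsum : ∑ j ∈ Finset.Iio i, v j = min m (∑ l ∈ Finset.range i.val, Dp d l) := by
    have e1 : ∑ j ∈ Finset.Iio i, v j = ∑ j ∈ Finset.Iio i, gvec d m j :=
      Finset.sum_congr rfl fun j hj => (heq j (Finset.mem_Iio.mp hj)).symm
    have e2 : ∑ j ∈ Finset.Iio i, gvec d m j = ∑ j ∈ Finset.range i.val, Gfun d m j := by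
      rw [← sum_Iio_fin (F := fun l => Gfun d m l) i]
      rfl
    rw [e1, e2, Gfun_psum]
  have hbound : ∑ j ∈ Finset.Iio i, v j + v i ≤ m := by
    have : ∑ j ∈ Finset.Iio i, v j + v i = ∑ j ∈ insert i (Finset.Iio i), v j := by
      rw [Finset.sum_insert (by simp)]
      ring
    rw [this, ← hv]
    exact Finset.sum_le_sum_of_subset (Finset.subset_univ _)
  have hgi : gvec d m i = min (d i - 1) (m - ∑ l ∈ Finset.range i.val, Dp d l) := by
    rw [gvec_apply, Gfun, Dp_apply]
  have hvi := hvd i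
  omega

/-- Uniqueness: a lex-largest nonmember of degree `m ≤ σ` is the greedy vector. -/
lemma U_eq_gvec {k : Type} [Field k] (d : Fin h → ℕ) (hd1 : ∀ i, 1 ≤ d i)
    {m : ℕ} (hm : m ≤ ∑ i, (d i - 1)) {u : Fin h →₀ ℕ}
    (hu : IsLexLargestNonmember (pows (k := k) le_rfl d) m u) : u = gvec d m := by
  obtain ⟨hsum, hnm, hmax⟩ := hu
  have hg1 : ∑ i, gvec d m i = m := gvec_sum d m hm
  have hg2 : (monomial (gvec d m) (1 : k)) ∉ pows (k := k) le_rfl d := by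
    rw [mem_pows_iff]
    push_neg
    intro i
    exact gvec_lt d hd1 m i
  have h1 : toLex (gvec d m) ≤ toLex u := hmax _ hg1 hg2
  have h2 : toLex u ≤ toLex (gvec d m) := by
    apply gvec_lex_max d m u hsum
    intro i
    by_contra hcon
    exact hnm ((mem_pows_iff d u).mpr ⟨i, by omega⟩)
  exact toLex.injective (le_antisymm h2 h1)

lemma phi_pos {k : Type} [Field k] (d : Fin h → ℕ) (hd1 : ∀ i, 1 ≤ d i)
    (U : ℕ → (Fin h →₀ ℕ))
    (hU : ∀ m, m ≤ ∑ i, (d i - 1) →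
      IsLexLargestNonmember (pows (k := k) le_rfl d) m (U m))
    {m : ℕ} (hm1 : 1 ≤ m) (hm2 : m ≤ ∑ i, (d i - 1)) :
    1 ≤ phi (k := k) d U m := by
  have hUm : U m = gvec d m := U_eq_gvec d hd1 hm2 (hU m hm2)
  have hUm1 : U (m - 1) = gvec d (m - 1) := U_eq_gvec d hd1 (by omega) (hU (m - 1) (by omega))
  have hle : gvec d (m - 1) ≤ gvec d m := gvec_mono d (by omega)
  have hlt : HF (pows (k := k) le_rfl d ⊔ Ideal.span {monomial (U (m - 1)) (1 : k)}) m
      < HF (pows (k := k) le_rfl d) m := by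
    apply HF_lt (w := monomial (gvec d m) (1 : k)) le_sup_left
    · rw [mem_homogeneousSubmodule]
      apply isHomogeneous_monomial
      have hdeg : (gvec d m).degree = ∑ i, gvec d m i :=
        Finset.sum_subset (Finset.subset_univ _)
          (fun i _ hi => Finsupp.notMem_support_iff.mp hi)
      rw [hdeg, gvec_sum d m hm2]
    · apply Ideal.mem_sup_right
      have heq : (monomial (gvec d m) (1 : k))
          = monomial (U (m - 1)) (1 : k) * monomial (gvec d m - gvec d (m - 1)) (1 : k) := by
        rw [hUm1, monomial_mul, one_mul, add_tsub_cancel_of_le hle]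
      rw [heq]
      exact Ideal.mul_mem_right _ _ (Ideal.subset_span rfl)
    · rw [mem_pows_iff]
      push_neg
      intro i
      exact gvec_lt d hd1 m i
  unfold phi
  omega

end Aux

theorem stmt15 {k : Type} [Field k] {h : ℕ} (d : Fin h → ℕ) (hd1 : ∀ i, 1 ≤ d i)
    (hmono : Monotone d) (D : ℕ) (hD1 : 1 ≤ D) (hD : D < ∑ i, (d i - 1))
    (U : ℕ → (Fin h →₀ ℕ))
    (hU : ∀ m, m ≤ ∑ i, (d i - 1) →
      IsLexLargestNonmember (pows (k := k) le_rfl d) m (U m)) :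
    (∑ i, (d i - 1)) - D ≤
        ∑ m ∈ Finset.Icc (D + 1) (∑ i, (d i - 1)), phi (k := k) d U m ∧
      (∏ i, (d i : ℤ)) -
          (∑ m ∈ Finset.Icc (D + 1) (∑ i, (d i - 1)), (phi (k := k) d U m : ℤ)) - 1 ≤
        (∏ i, (d i : ℤ)) - (∑ i, (d i - 1) : ℕ) + D - 1 := by
  set σ := ∑ i, (d i - 1) with hσ
  have key : σ - D ≤ ∑ m ∈ Finset.Icc (D + 1) σ, phi (k := k) d U m := by
    calc σ - D = (Finset.Icc (D + 1) σ).card := by rw [Nat.card_Icc]; omega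
    _ = ∑ m ∈ Finset.Icc (D + 1) σ, 1 := by rw [Finset.sum_const, smul_eq_mul, mul_one]
    _ ≤ ∑ m ∈ Finset.Icc (D + 1) σ, phi (k := k) d U m := by
        apply Finset.sum_le_sum
        intro m hm
        rw [Finset.mem_Icc] at hm
        exact phi_pos d hd1 U hU (by omega) hm.2
  refine ⟨key, ?_⟩
  have hcast : ((σ - D : ℕ) : ℤ) ≤ ((∑ m ∈ Finset.Icc (D + 1) σ, phi (k := k) d U m : ℕ) : ℤ) := by
    exact_mod_cast key
  rw [Nat.cast_sub (le_of_lt hD)] at hcast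
  push_cast at hcast ⊢
  linarith
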